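/- Let 𝓗 be a connected hypergraph on H equipped with a total order on H. Then the reflexive–transitive closure →* of the flip relation → on the constructions of 𝓗 is antisymmetric, hence a partial order; moreover the flip relation → is well-founded. -/

import Mathlib

open scoped Classical

noncomputable section

/-! ## Hypergraphs (nestohedra combinatorics), after Curien–Laplante-Anfossi:
hypergraphs, restrictions, connectivity, saturation, reconnected restriction,
constructs/constructions, the face order, the flip rewriting, and terms over the
associated signatures. -/

/-- A hypergraph on a finite vertex set: a finite set of nonempty hyperedges whose union is
the vertex set, assumed atomic (every singleton is a hyperedge). -/
structure FinHypergraph (α : Type*) [DecidableEq α] where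
  verts : Finset α
  edges : Finset (Finset α)
  edges_nonempty : ∀ e ∈ edges, e.Nonempty
  edges_subset : ∀ e ∈ edges, e ⊆ verts
  atomic : ∀ v ∈ verts, {v} ∈ edges

namespace FinHypergraph

variable {α : Type*} [DecidableEq α]

/-- The plain restriction `𝓗_X` of a hypergraph to a subset `X` of its vertices. -/
def restrict (H : FinHypergraph α) (X : Finset α) : FinHypergraph α where
  verts := X ∩ H.verts
  edges := H.edges.filter (· ⊆ X)
  edges_nonempty e he := H.edges_nonempty e (Finset.mem_filter.mp he).1
  edges_subset e he :=
    Finset.subset_inter (Finset.mem_filter.mp he).2 (H.edges_subset e (Finset.mem_filter.mp he).1)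
  atomic v hv := by
    rcases Finset.mem_inter.mp hv with ⟨h1, h2⟩
    exact Finset.mem_filter.mpr ⟨H.atomic v h2, Finset.singleton_subset_iff.mpr h1⟩

/-- A hypergraph is connected if its vertex set is nonempty and admits no nontrivial
partition `X₁ ∪ X₂` such that every edge lies in `X₁` or in `X₂`. -/
def Connected (H : FinHypergraph α) : Prop :=
  H.verts.Nonempty ∧ ∀ X₁ X₂ : Finset α, X₁.Nonempty → X₂.Nonempty →
    Disjoint X₁ X₂ → X₁ ∪ X₂ = H.verts → ∃ e ∈ H.edges, ¬e ⊆ X₁ ∧ ¬e ⊆ X₂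

/-- `C` is (the vertex set of) a connected component of `H`: a maximal connected subset. -/
def IsComponent (H : FinHypergraph α) (C : Finset α) : Prop :=
  C ⊆ H.verts ∧ (H.restrict C).Connected ∧
    ∀ D : Finset α, C ⊆ D → D ⊆ H.verts → (H.restrict D).Connected → D = C

/-- `y` and `z` lie in the same connected component of `H`. -/
def SameComponent (H : FinHypergraph α) (y z : α) : Prop :=
  ∃ C : Finset α, H.IsComponent C ∧ y ∈ C ∧ z ∈ C

/-- The saturation `Sat(𝓗)`: the set of (nonempty) connected subsets of vertices. -/
def sat (H : FinHypergraph α) : Finset (Finset α) :=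
  H.verts.powerset.filter fun X => (H.restrict X).Connected

theorem singleton_connected (H : FinHypergraph α) {v : α} (hv : v ∈ H.verts) :
    (H.restrict {v}).Connected := by
  constructor
  · exact ⟨v, Finset.mem_inter.mpr ⟨Finset.mem_singleton_self v, hv⟩⟩
  · intro X₁ X₂ h₁ h₂ hd hu
    exfalso
    have hv' : ({v} : Finset α) ∩ H.verts = {v} :=
      Finset.inter_eq_left.mpr (Finset.singleton_subset_iff.mpr hv)
    have hu' : X₁ ∪ X₂ = ({v} : Finset α) := hu.trans hv'
    have hX₁ : X₁ ⊆ {v} := hu' ▸ Finset.subset_union_left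
    have hX₂ : X₂ ⊆ {v} := hu' ▸ Finset.subset_union_right
    obtain ⟨a, ha⟩ := h₁
    obtain ⟨b, hb⟩ := h₂
    have ha' := Finset.mem_singleton.mp (hX₁ ha)
    have hb' := Finset.mem_singleton.mp (hX₂ hb)
    subst ha'; exact Finset.disjoint_left.mp hd ha (hb' ▸ hb)

/-- The reconnected restriction `𝓗 ↾ X` of `𝓗` to `X`. -/
def reconRestrict (H : FinHypergraph α) (X : Finset α) : FinHypergraph α where
  verts := X ∩ H.verts
  edges := (H.sat.image (· ∩ X)).filter (·.Nonempty)
  edges_nonempty e he := (Finset.mem_filter.mp he).2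
  edges_subset := by
    intro e he
    rcases Finset.mem_image.mp (Finset.mem_filter.mp he).1 with ⟨Z, hZ, rfl⟩
    have hZv : Z ⊆ H.verts := Finset.mem_powerset.mp (Finset.mem_filter.mp hZ).1
    exact fun a ha => Finset.mem_inter.mpr
      ⟨(Finset.mem_inter.mp ha).2, hZv (Finset.mem_inter.mp ha).1⟩
  atomic := by
    intro v hv
    rcases Finset.mem_inter.mp hv with ⟨h1, h2⟩
    refine Finset.mem_filter.mpr ⟨Finset.mem_image.mpr ⟨{v}, ?_, ?_⟩, ?_⟩
    · exact Finset.mem_filter.mpr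
        ⟨Finset.mem_powerset.mpr (Finset.singleton_subset_iff.mpr h2),
         H.singleton_connected h2⟩
    · exact Finset.inter_eq_left.mpr (Finset.singleton_subset_iff.mpr h1)
    · exact ⟨v, by simp [Finset.inter_eq_left.mpr (Finset.singleton_subset_iff.mpr h1)]⟩

/-- `x ⇝ {y,z}` in `𝓗`: after removing `x`, the vertices `y` and `z` lie in the same
connected component.  Its negation is "`x` disconnects `y` and `z` in `𝓗`". -/
def Links (H : FinHypergraph α) (x y z : α) : Prop :=
  (H.restrict (H.verts \ {x})).SameComponent y z

/-- A hypergraph is contextual if for every connected subset `Y` of cardinality at least 3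
and all distinct `x, y, z ∈ Y`, `x` disconnects `y` and `z` in `𝓗_Y` iff it does in `𝓗`. -/
def Contextual (H : FinHypergraph α) : Prop :=
  ∀ Y : Finset α, Y ⊆ H.verts → (H.restrict Y).Connected → 3 ≤ Y.card →
    ∀ x y z : α, x ∈ Y → y ∈ Y → z ∈ Y → x ≠ y → y ≠ z → x ≠ z →
      ((H.restrict Y).Links x y z ↔ H.Links x y z)

end FinHypergraph

/-- Finite rooted trees with nodes decorated by finite sets (potential constructs). -/
inductive FTree (α : Type*) : Type _ where
  | node : Finset α → List (FTree α) → FTree α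

namespace FTree

variable {α : Type*} [DecidableEq α]

/-- The decoration of the root node. -/
def label : FTree α → Finset α
  | node Y _ => Y

/-- The list of children of the root node. -/
def children : FTree α → List (FTree α)
  | node _ ts => ts

/-- The support of a tree: the union of the decorations of its nodes. -/
def support : FTree α → Finset α
  | node Y [] => Y
  | node Y (t :: ts) => support t ∪ support (node Y ts)

/-- The list of decorations of the nodes of a tree. -/
def labels : FTree α → List (Finset α)
  | node Y [] => [Y]
  | node Y (t :: ts) => labels t ++ labels (node Y ts)

/-- The dimension of a construct: the sum over its nodes `X` of `|X| - 1`. -/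
def dim (T : FTree α) : ℕ := (T.labels.map fun X => X.card - 1).sum

mutual
  /-- The (full) subtree rooted at the node decorated by `X`, if any. -/
  def subtreeAt : FTree α → Finset α → Option (FTree α)
    | node Y ts, X => if Y = X then some (node Y ts) else subtreeAtList ts X
  def subtreeAtList : List (FTree α) → Finset α → Option (FTree α)
    | [], _ => none
    | t :: ts, X => (subtreeAt t X).elim (subtreeAtList ts X) some
end

/-- The support `supp (T ↾ X)` of the subtree rooted at the node decorated by `X`
(or `∅` if there is no such node). -/
def suppAt (T : FTree α) (X : Finset α) : Finset α :=
  ((T.subtreeAt X).map support).getD ∅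

mutual
  /-- The list of supports of the subtrees rooted at the nodes of `T` (its nested set). -/
  def nests : FTree α → List (Finset α)
    | node Y ts => support (node Y ts) :: nestsList ts
  def nestsList : List (FTree α) → List (Finset α)
    | [] => []
    | t :: ts => nests t ++ nestsList ts
end

/-- The nested set of a tree, as a finite set. -/
def nestSet (T : FTree α) : Finset (Finset α) := T.nests.toFinset

/-- `S ≺ T` (`S` is covered by `T`) in the face order: `T` is obtained from `S` by
contracting one edge between a node and its father (equivalently, the nested set of `T`
is obtained from that of `S` by removing one non-root element). -/
def CoveredBy (S T : FTree α) : Prop :=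
  ∃ N ∈ S.nests, N ≠ S.support ∧ T.nestSet = S.nestSet.erase N

/-- The face (subface) order `S ≼ T` on constructs: the reflexive–transitive closure of
the covering relation `≺`. -/
def FaceLe (S T : FTree α) : Prop := Relation.ReflTransGen CoveredBy S T

/-- `IsSubtree S T`: `S` is a (full) subtree of `T`. -/
inductive IsSubtree : FTree α → FTree α → Prop
  | refl (t : FTree α) : IsSubtree t t
  | child {s t u : FTree α} : IsSubtree s t → t ∈ u.children → IsSubtree s u

/-- In `T`, the node decorated by `X` has a child decorated by `Y`. -/
def ParentChild (X Y : Finset α) (T : FTree α) : Prop :=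
  ∃ R : FTree α, IsSubtree R T ∧ R.label = X ∧ ∃ t ∈ R.children, t.label = Y

mutual
  /-- Pruning: remove all (subtrees rooted at) nodes whose decoration is not a subset
  of `X`, keeping the root. -/
  def prune (X : Finset α) : FTree α → FTree α
    | node Y ts => node Y (pruneList X ts)
  def pruneList (X : Finset α) : List (FTree α) → List (FTree α)
    | [] => []
    | t :: ts => if t.label ⊆ X then prune X t :: pruneList X ts else pruneList X ts
end

end FTree

/-- `IsConstruct H T`: the tree `T` is a construct of the hypergraph `H`: its root `Y` is a
nonempty subset of the vertices, its children are constructs of the connected components of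
`𝓗 ∖ Y` (one for each component, listed by increasing maximal vertex). -/
inductive IsConstruct {α : Type*} [LinearOrder α] : FinHypergraph α → FTree α → Prop
  | node {H : FinHypergraph α} (Y : Finset α) (ts : List (FTree α))
      (hY : Y.Nonempty) (hYsub : Y ⊆ H.verts)
      (hmem : ∀ t ∈ ts, (H.restrict (H.verts \ Y)).IsComponent t.support)
      (hcover : ∀ C : Finset α, (H.restrict (H.verts \ Y)).IsComponent C →
        ∃ t ∈ ts, t.support = C)
      (hsorted : ts.Pairwise fun a b => a.support.max < b.support.max)
      (hchild : ∀ t ∈ ts, IsConstruct (H.restrict t.support) t) :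
      IsConstruct H (FTree.node Y ts)

section ConstructionOrder

variable {α : Type*} [LinearOrder α]

/-- A construction: a construct all of whose nodes are singletons (a vertex of the
nestohedron). -/
def IsConstruction (H : FinHypergraph α) (T : FTree α) : Prop :=
  IsConstruct H T ∧ ∀ X ∈ T.labels, X.card = 1

/-- An `X`-face: a 2-dimensional construct whose unique non-singleton node is decorated
by `X`, of cardinality 3. -/
def IsXFace (H : FinHypergraph α) (X : Finset α) (T : FTree α) : Prop :=
  IsConstruct H T ∧ X.card = 3 ∧ X ∈ T.labels ∧ ∀ Y ∈ T.labels, Y ≠ X → Y.card = 1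

/-- Two distinct constructions are joined by an edge of the nestohedron: both are covered
by a common 1-dimensional construct. -/
def EdgeJoined (H : FinHypergraph α) (S T : FTree α) : Prop :=
  IsConstruction H S ∧ IsConstruction H T ∧ S ≠ T ∧
  ∃ V : FTree α, IsConstruct H V ∧ V.dim = 1 ∧ FTree.CoveredBy S V ∧ FTree.CoveredBy T V

/-- The flip rewriting relation `S → T` on constructions of an ordered hypergraph:
`S` and `T` are the two endpoints of an edge whose 1-dimensional face has unique
non-singleton node `{x, y}` with `x < y`, and in `S` the node `{x}` is the parent of the
node `{y}`. -/
def Flip (H : FinHypergraph α) (S T : FTree α) : Prop :=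
  IsConstruction H S ∧ IsConstruction H T ∧ S ≠ T ∧
  ∃ (V : FTree α) (x y : α), IsConstruct H V ∧ V.dim = 1 ∧ x ≠ y ∧
    ({x, y} : Finset α) ∈ V.labels ∧ FTree.CoveredBy S V ∧ FTree.CoveredBy T V ∧
    FTree.ParentChild ({x} : Finset α) ({y} : Finset α) S ∧ x < y

/-- The coordinate vector of a construction `S` of `H`:
`v^S_x = |{e ∈ Sat(𝓗) : x ∈ e ⊆ supp (S ↾ x)}|`. -/
def coordVec (H : FinHypergraph α) (S : FTree α) (x : α) : ℕ :=
  (H.sat.filter fun e => x ∈ e ∧ e ⊆ S.suppAt {x}).card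

end ConstructionOrder

/-- Raw terms over the signature `Σ_𝓗` (and `Σ^c_𝓗`): variables are (connected) subsets,
function symbols are pairs `(X, Y)` of subsets, applied to a list of arguments. -/
inductive HTerm (α : Type*) : Type _ where
  | var : Finset α → HTerm α
  | app : Finset α → Finset α → List (HTerm α) → HTerm α

namespace HTerm

variable {α : Type*} [DecidableEq α]

/-- The (output) sort of a term. -/
def sortOf : HTerm α → Finset α
  | var A => A
  | app _ Y _ => Y

/-- The list of variables occurring in a term. -/
def varsList : HTerm α → List (Finset α)
  | var A => [A]
  | app _ _ [] => []
  | app X Y (t :: ts) => varsList t ++ varsList (app X Y ts)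

/-- The list of first components of the function symbols occurring in a term. -/
def appFirsts : HTerm α → List (Finset α)
  | var _ => []
  | app X _ [] => [X]
  | app X Y (t :: ts) => appFirsts t ++ appFirsts (app X Y ts)

/-- A term is closed if it contains no variables. -/
def Closed (t : HTerm α) : Prop := t.varsList = []

/-- The union `⋃ var(t)` of the variables of a term. -/
def varsUnion (t : HTerm α) : Finset α := t.varsList.foldr (· ∪ ·) ∅

mutual
  /-- Projection of a term to a decorated tree: every function symbol `(X, Y)` is sent to
  its first component `X`, and all variables are pruned. -/
  def toTree : HTerm α → FTree α
    | .var A => .node A []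
    | .app X _ ts => .node X (toTreeList ts)
  def toTreeList : List (HTerm α) → List (FTree α)
    | [] => []
    | .var _ :: ts => toTreeList ts
    | t :: ts => toTree t :: toTreeList ts
end

end HTerm

/-- Well-formed terms over the signature `Σ_𝓗` associated with the hypergraph `H`:
a variable is a connected subset (its own sort); a function symbol `(X, Y)` (with
`∅ ≠ X ⊆ Y ⊆ H` and `Y` connected) is applied to arguments whose sorts are exactly the
connected components of `𝓗_Y ∖ X`, listed by increasing maximal vertex. -/
inductive IsTerm {α : Type*} [LinearOrder α] (H : FinHypergraph α) : HTerm α → Prop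
  | var (A : Finset α) : A ⊆ H.verts → (H.restrict A).Connected → IsTerm H (.var A)
  | app (X Y : Finset α) (ts : List (HTerm α)) :
      X.Nonempty → X ⊆ Y → Y ⊆ H.verts → (H.restrict Y).Connected →
      (∀ t ∈ ts, (H.restrict (Y \ X)).IsComponent t.sortOf) →
      (∀ C : Finset α, (H.restrict (Y \ X)).IsComponent C → ∃ t ∈ ts, t.sortOf = C) →
      ts.Pairwise (fun a b => a.sortOf.max < b.sortOf.max) →
      (∀ t ∈ ts, IsTerm H t) →
      IsTerm H (.app X Y ts)

section Aux

open Finset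

variable {α : Type*} [DecidableEq α]

namespace FinHypergraph

theorem restrict_verts_of_subset (H : FinHypergraph α) {A : Finset α} (hA : A ⊆ H.verts) :
    (H.restrict A).verts = A := Finset.inter_eq_left.mpr hA

theorem restrict_restrict (H : FinHypergraph α) {A B : Finset α} (hBA : B ⊆ A) :
    (H.restrict A).restrict B = H.restrict B := by
  unfold restrict
  congr 1
  · simp [Finset.inter_assoc, Finset.inter_eq_right.mpr hBA,
      Finset.inter_comm B A, ← Finset.inter_assoc, Finset.inter_eq_left.mpr hBA]
  · ext e
    simp only [Finset.mem_filter, and_assoc]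
    constructor
    · rintro ⟨h1, h2, h3⟩; exact ⟨h1, h3⟩
    · rintro ⟨h1, h3⟩; exact ⟨h1, h3.trans hBA, h3⟩

theorem restrict_self (H : FinHypergraph α) : H.restrict H.verts = H := by
  unfold restrict
  cases H with
  | mk v e hne hsub hat =>
    congr 1
    · simp
    · simpa using Finset.filter_true_of_mem fun x hx => hsub x hx

/-- helper for connectivity of unions -/
theorem exists_edge_of_partition {G : FinHypergraph α} {A X₁ X₂ : Finset α}
    (hA : A ⊆ G.verts) (hc : (G.restrict A).Connected)
    (hsub : A ⊆ X₁ ∪ X₂) (hd : Disjoint X₁ X₂)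
    (h1 : (A ∩ X₁).Nonempty) (h2 : (A ∩ X₂).Nonempty) :
    ∃ e ∈ G.edges, e ⊆ A ∧ ¬e ⊆ X₁ ∧ ¬e ⊆ X₂ := by
  have hv : (G.restrict A).verts = A := G.restrict_verts_of_subset hA
  obtain ⟨e, he, hne1, hne2⟩ := hc.2 (A ∩ X₁) (A ∩ X₂) h1 h2
    (hd.mono Finset.inter_subset_right Finset.inter_subset_right)
    (by rw [← Finset.inter_union_distrib_left, hv, Finset.inter_eq_left.mpr hsub])
  rcases Finset.mem_filter.mp he with ⟨heG, heA⟩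
  refine ⟨e, heG, heA, fun h => hne1 fun a ha => ?_, fun h => hne2 fun a ha => ?_⟩
  · exact Finset.mem_inter.mpr ⟨heA ha, h ha⟩
  · exact Finset.mem_inter.mpr ⟨heA ha, h ha⟩

theorem connected_union {G : FinHypergraph α} {A B : Finset α}
    (hA : A ⊆ G.verts) (hB : B ⊆ G.verts)
    (hcA : (G.restrict A).Connected) (hcB : (G.restrict B).Connected)
    (hne : (A ∩ B).Nonempty) : (G.restrict (A ∪ B)).Connected := by
  have hAB : A ∪ B ⊆ G.verts := Finset.union_subset hA hB
  constructor
  · rw [G.restrict_verts_of_subset hAB]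
    obtain ⟨v, hv⟩ := hne
    exact ⟨v, Finset.mem_union_left _ (Finset.mem_inter.mp hv).1⟩
  · intro X₁ X₂ h1 h2 hd hu
    have hv : (G.restrict (A ∪ B)).verts = A ∪ B := G.restrict_verts_of_subset hAB
    rw [hv] at hu
    have hsubAB : A ∪ B ⊆ X₁ ∪ X₂ := hu.ge
    have hsubA : A ⊆ X₁ ∪ X₂ := Finset.subset_union_left.trans hsubAB
    have hsubB : B ⊆ X₁ ∪ X₂ := Finset.subset_union_right.trans hsubAB
    obtain ⟨v, hv'⟩ := hne
    rcases Finset.mem_inter.mp hv' with ⟨hvA, hvB⟩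
    have key : ∃ e ∈ G.edges, e ⊆ A ∪ B ∧ ¬e ⊆ X₁ ∧ ¬e ⊆ X₂ := by
      by_cases hA1 : (A ∩ X₁).Nonempty
      · by_cases hA2 : (A ∩ X₂).Nonempty
        · obtain ⟨e, he, hs, hn1, hn2⟩ := exists_edge_of_partition hA hcA hsubA hd hA1 hA2
          exact ⟨e, he, hs.trans Finset.subset_union_left, hn1, hn2⟩
        · -- A ⊆ X₂? no: A ∩ X₂ empty means A ⊆ X₁
          have hAX1 : A ⊆ X₁ := by
            intro a ha
            rcases Finset.mem_union.mp (hsubA ha) with h | h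
            · exact h
            · exact absurd ⟨a, Finset.mem_inter.mpr ⟨ha, h⟩⟩ hA2
          -- X₂ ⊆ B
          have hB2 : (B ∩ X₂).Nonempty := by
            obtain ⟨w, hw⟩ := h2
            have hwAB : w ∈ A ∪ B := hu.le (Finset.mem_union_right _ hw)
            rcases Finset.mem_union.mp hwAB with h | h
            · exact absurd hw (Finset.disjoint_left.mp hd (hAX1 h))
            · exact ⟨w, Finset.mem_inter.mpr ⟨h, hw⟩⟩
          have hB1 : (B ∩ X₁).Nonempty := ⟨v, Finset.mem_inter.mpr ⟨hvB, hAX1 hvA⟩⟩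
          obtain ⟨e, he, hs, hn1, hn2⟩ := exists_edge_of_partition hB hcB hsubB hd hB1 hB2
          exact ⟨e, he, hs.trans Finset.subset_union_right, hn1, hn2⟩
      · -- A ⊆ X₂
        have hAX2 : A ⊆ X₂ := by
          intro a ha
          rcases Finset.mem_union.mp (hsubA ha) with h | h
          · exact absurd ⟨a, Finset.mem_inter.mpr ⟨ha, h⟩⟩ hA1
          · exact h
        have hB1 : (B ∩ X₁).Nonempty := by
          obtain ⟨w, hw⟩ := h1
          have hwAB : w ∈ A ∪ B := hu.le (Finset.mem_union_left _ hw)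
          rcases Finset.mem_union.mp hwAB with h | h
          · exact absurd hw (Finset.disjoint_right.mp hd (hAX2 h))
          · exact ⟨w, Finset.mem_inter.mpr ⟨h, hw⟩⟩
        have hB2 : (B ∩ X₂).Nonempty := ⟨v, Finset.mem_inter.mpr ⟨hvB, hAX2 hvA⟩⟩
        obtain ⟨e, he, hs, hn1, hn2⟩ := exists_edge_of_partition hB hcB hsubB hd hB1 hB2
        exact ⟨e, he, hs.trans Finset.subset_union_right, hn1, hn2⟩
    obtain ⟨e, he, hs, hn1, hn2⟩ := key
    exact ⟨e, Finset.mem_filter.mpr ⟨he, hs⟩, hn1, hn2⟩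

theorem IsComponent.nonempty {G : FinHypergraph α} {C : Finset α} (h : G.IsComponent C) :
    C.Nonempty := by
  obtain ⟨v, hv⟩ := h.2.1.1
  exact ⟨v, (Finset.mem_inter.mp hv).1⟩

theorem exists_isComponent {G : FinHypergraph α} {v : α} (hv : v ∈ G.verts) :
    ∃ C, G.IsComponent C ∧ v ∈ C := by
  classical
  set S := G.verts.powerset.filter (fun C => v ∈ C ∧ (G.restrict C).Connected) with hS
  have hSne : S.Nonempty :=
    ⟨{v}, Finset.mem_filter.mpr ⟨Finset.mem_powerset.mpr (Finset.singleton_subset_iff.mpr hv),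
      Finset.mem_singleton_self v, G.singleton_connected hv⟩⟩
  obtain ⟨C, hC, hmax⟩ := S.exists_max_image Finset.card hSne
  rcases Finset.mem_filter.mp hC with ⟨hCp, hvC, hCc⟩
  refine ⟨C, ⟨Finset.mem_powerset.mp hCp, hCc, fun D hCD hDv hDc => ?_⟩, hvC⟩
  have hD : D ∈ S := Finset.mem_filter.mpr ⟨Finset.mem_powerset.mpr hDv, hCD hvC, hDc⟩
  exact (Finset.eq_of_subset_of_card_le hCD (hmax D hD)).symm

theorem isComponent_eq_of_nonempty_inter {G : FinHypergraph α} {C D : Finset α}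
    (hC : G.IsComponent C) (hD : G.IsComponent D) (h : (C ∩ D).Nonempty) : C = D := by
  have hu : (G.restrict (C ∪ D)).Connected :=
    connected_union hC.1 hD.1 hC.2.1 hD.2.1 h
  have h1 : C ∪ D = C := hC.2.2 _ Finset.subset_union_left
    (Finset.union_subset hC.1 hD.1) hu
  have h2 : C ∪ D = D := hD.2.2 _ Finset.subset_union_right
    (Finset.union_subset hC.1 hD.1) hu
  rw [← h1, h2]

end FinHypergraph

end Aux
set_option linter.unusedSectionVars false

namespace FTree

variable {α : Type*} [DecidableEq α]

theorem label_node (Y : Finset α) (ts : List (FTree α)) : (node Y ts).label = Y := rfl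

theorem children_node (Y : Finset α) (ts : List (FTree α)) : (node Y ts).children = ts := rfl

theorem mem_support_node {Y : Finset α} {ts : List (FTree α)} {a : α} :
    a ∈ (node Y ts).support ↔ a ∈ Y ∨ ∃ t ∈ ts, a ∈ t.support := by
  induction ts with
  | nil => simp [support]
  | cons t ts ih =>
    simp only [support, Finset.mem_union, ih, List.mem_cons]
    constructor
    · rintro (h | h | ⟨u, hu, hmem⟩)
      · exact Or.inr ⟨t, Or.inl rfl, h⟩
      · exact Or.inl h
      · exact Or.inr ⟨u, Or.inr hu, hmem⟩
    · rintro (h | ⟨u, rfl | hu, hmem⟩)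
      · exact Or.inr (Or.inl h)
      · exact Or.inl hmem
      · exact Or.inr (Or.inr ⟨u, hu, hmem⟩)

theorem label_subset_support (T : FTree α) : T.label ⊆ T.support := by
  cases T with
  | node Y ts => intro a ha; exact mem_support_node.mpr (Or.inl ha)

theorem mem_labels_node {Y : Finset α} {ts : List (FTree α)} {L : Finset α} :
    L ∈ (node Y ts).labels ↔ L = Y ∨ ∃ t ∈ ts, L ∈ t.labels := by
  induction ts with
  | nil => simp [labels]
  | cons t ts ih =>
    simp only [labels, List.mem_append, ih, List.mem_cons]
    constructor
    · rintro (h | h | ⟨u, hu, hmem⟩)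
      · exact Or.inr ⟨t, Or.inl rfl, h⟩
      · exact Or.inl h
      · exact Or.inr ⟨u, Or.inr hu, hmem⟩
    · rintro (h | ⟨u, rfl | hu, hmem⟩)
      · exact Or.inr (Or.inl h)
      · exact Or.inl hmem
      · exact Or.inr (Or.inr ⟨u, hu, hmem⟩)

theorem nests_node (Y : Finset α) (ts : List (FTree α)) :
    (node Y ts).nests = (node Y ts).support :: nestsList ts := rfl

theorem mem_nestsList {ts : List (FTree α)} {A : Finset α} :
    A ∈ nestsList ts ↔ ∃ t ∈ ts, A ∈ t.nests := by
  induction ts with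
  | nil => simp [nestsList]
  | cons t ts ih =>
    simp only [nestsList, List.mem_append, ih, List.mem_cons]
    constructor
    · rintro (h | ⟨u, hu, hmem⟩)
      · exact ⟨t, Or.inl rfl, h⟩
      · exact ⟨u, Or.inr hu, hmem⟩
    · rintro ⟨u, rfl | hu, hmem⟩
      · exact Or.inl hmem
      · exact Or.inr ⟨u, hu, hmem⟩

theorem support_mem_nests (T : FTree α) : T.support ∈ T.nests := by
  cases T with
  | node Y ts => rw [nests_node]; exact List.mem_cons_self

theorem subtreeAtList_eq_some {ts : List (FTree α)} {X : Finset α} {R : FTree α}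
    (h : subtreeAtList ts X = some R) : ∃ t ∈ ts, subtreeAt t X = some R := by
  induction ts with
  | nil => simp [subtreeAtList] at h
  | cons t ts ih =>
    rw [subtreeAtList] at h
    cases hs : subtreeAt t X with
    | none =>
      rw [hs] at h
      obtain ⟨u, hu, h'⟩ := ih h
      exact ⟨u, List.mem_cons_of_mem _ hu, h'⟩
    | some s =>
      rw [hs] at h
      simp only [Option.elim] at h
      exact ⟨t, List.mem_cons_self, hs.trans h⟩

theorem subtreeAtList_eq_none {ts : List (FTree α)} {X : Finset α}
    (h : subtreeAtList ts X = none) : ∀ t ∈ ts, subtreeAt t X = none := by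
  induction ts with
  | nil => simp
  | cons t ts ih =>
    rw [subtreeAtList] at h
    cases hs : subtreeAt t X with
    | none =>
      rw [hs] at h
      intro u hu
      rcases List.mem_cons.mp hu with rfl | hu
      · exact hs
      · exact ih h u hu
    | some s => rw [hs] at h; simp [Option.elim] at h

theorem IsSubtree.support_subset {R T : FTree α} (h : IsSubtree R T) :
    R.support ⊆ T.support := by
  induction h with
  | refl => exact Finset.Subset.refl _
  | child h1 h2 ih =>
    rename_i t u
    refine ih.trans ?_
    cases u with
    | node Y ts =>
      intro a ha
      exact mem_support_node.mpr (Or.inr ⟨t, h2, ha⟩)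

theorem IsSubtree.trans {A B C : FTree α} (h1 : IsSubtree A B) (h2 : IsSubtree B C) :
    IsSubtree A C := by
  induction h2 with
  | refl => exact h1
  | child h2' hm ih => exact IsSubtree.child ih hm

theorem IsSubtree.support_mem_nests {R T : FTree α} (h : IsSubtree R T) :
    R.support ∈ T.nests := by
  induction h with
  | refl => exact FTree.support_mem_nests _
  | child h1 h2 ih =>
    rename_i t u
    cases u with
    | node Y ts =>
      rw [nests_node]
      exact List.mem_cons_of_mem _ (mem_nestsList.mpr ⟨t, h2, ih⟩)

theorem isSubtree_inv {R T : FTree α} (h : IsSubtree R T) :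
    R = T ∨ ∃ t ∈ T.children, IsSubtree R t := by
  cases h with
  | refl => exact Or.inl rfl
  | child h1 h2 => exact Or.inr ⟨_, h2, h1⟩

end FTree
section ConstructLemmas

open FTree FinHypergraph

variable {α : Type*} [LinearOrder α]

theorem FTree.child_support_subset {Y : Finset α} {ts : List (FTree α)} {t : FTree α}
    (ht : t ∈ ts) : t.support ⊆ (FTree.node Y ts).support := by
  intro a ha; exact mem_support_node.mpr (Or.inr ⟨t, ht, ha⟩)

theorem IsConstruct.label_nonempty {G : FinHypergraph α} {T : FTree α}
    (h : IsConstruct G T) : T.label.Nonempty := by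
  cases h with
  | node Y ts hY => exact hY

theorem IsConstruct.child_support {G : FinHypergraph α} {Y : Finset α} {ts : List (FTree α)}
    (h : IsConstruct G (FTree.node Y ts)) {t : FTree α} (ht : t ∈ ts) :
    t.support ⊆ G.verts \ Y := by
  cases h with
  | node Y ts hY hYsub hmem hcover hsorted hchild =>
    refine (hmem t ht).1.trans ?_
    rw [FinHypergraph.restrict]
    exact Finset.inter_subset_left

theorem IsConstruct.support_eq {G : FinHypergraph α} {T : FTree α}
    (h : IsConstruct G T) : T.support = G.verts := by
  cases h with
  | node Y ts hY hYsub hmem hcover hsorted hchild =>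
    apply Finset.Subset.antisymm
    · intro a ha
      rcases mem_support_node.mp ha with h' | ⟨t, ht, h'⟩
      · exact hYsub h'
      · have := (IsConstruct.node Y ts hY hYsub hmem hcover hsorted hchild).child_support ht h'
        exact (Finset.mem_sdiff.mp this).1
    · intro a ha
      by_cases hay : a ∈ Y
      · exact mem_support_node.mpr (Or.inl hay)
      · have ha' : a ∈ (G.restrict (G.verts \ Y)).verts := by
          rw [G.restrict_verts_of_subset (Finset.sdiff_subset)]
          exact Finset.mem_sdiff.mpr ⟨ha, hay⟩
        obtain ⟨C, hC, haC⟩ := FinHypergraph.exists_isComponent ha'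
        obtain ⟨t, ht, hts⟩ := hcover C hC
        exact mem_support_node.mpr (Or.inr ⟨t, ht, hts ▸ haC⟩)

theorem IsConstruct.child_support_subset_verts {G : FinHypergraph α} {Y : Finset α}
    {ts : List (FTree α)} (h : IsConstruct G (FTree.node Y ts)) {t : FTree α} (ht : t ∈ ts) :
    t.support ⊆ G.verts := (h.child_support ht).trans Finset.sdiff_subset

theorem IsConstruct.child_connected {G : FinHypergraph α} {Y : Finset α}
    {ts : List (FTree α)} (h : IsConstruct G (FTree.node Y ts)) {t : FTree α} (ht : t ∈ ts) :
    (G.restrict t.support).Connected := by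
  have hsub := h.child_support ht
  cases h with
  | node Y ts hY hYsub hmem hcover hsorted hchild =>
    have h2 := (hmem t ht).2.1
    rwa [FinHypergraph.restrict_restrict G hsub] at h2

theorem IsConstruct.child_construct {G : FinHypergraph α} {Y : Finset α}
    {ts : List (FTree α)} (h : IsConstruct G (FTree.node Y ts)) {t : FTree α} (ht : t ∈ ts) :
    IsConstruct (G.restrict t.support) t := by
  cases h with
  | node Y ts hY hYsub hmem hcover hsorted hchild => exact hchild t ht

theorem IsConstruct.nest_spec {G : FinHypergraph α} {T : FTree α}
    (h : IsConstruct G T) (hG : G.Connected) {A : Finset α} (hA : A ∈ T.nests) :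
    A.Nonempty ∧ A ⊆ G.verts ∧ (G.restrict A).Connected := by
  induction h generalizing A with
  | @node G' Y ts hY hYsub hmem hcover hsorted hchild ih =>
    have hcon := IsConstruct.node Y ts hY hYsub hmem hcover hsorted hchild
    rw [nests_node] at hA
    rcases List.mem_cons.mp hA with rfl | hA
    · rw [hcon.support_eq]
      exact ⟨hG.1, Finset.Subset.refl _, by rwa [G'.restrict_self]⟩
    · obtain ⟨t, ht, hAt⟩ := mem_nestsList.mp hA
      have htc : (G'.restrict t.support).Connected := hcon.child_connected ht
      obtain ⟨h1, h2, h3⟩ := ih t ht htc hAt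
      have hts : t.support ⊆ G'.verts := hcon.child_support_subset_verts ht
      rw [G'.restrict_verts_of_subset hts] at h2
      rw [FinHypergraph.restrict_restrict G' h2] at h3
      exact ⟨h1, h2.trans hts, h3⟩

theorem IsConstruct.nest_subset_support {G : FinHypergraph α} {T : FTree α}
    (h : IsConstruct G T) (hG : G.Connected) {A : Finset α} (hA : A ∈ T.nests) :
    A ⊆ T.support := by
  rw [h.support_eq]; exact (h.nest_spec hG hA).2.1

theorem IsConstruct.subtree_construct {G : FinHypergraph α} {T : FTree α}
    (h : IsConstruct G T) {R : FTree α} (hR : IsSubtree R T) :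
    IsConstruct (G.restrict R.support) R := by
  induction h generalizing R with
  | @node G' Y ts hY hYsub hmem hcover hsorted hchild ih =>
    have hcon := IsConstruct.node Y ts hY hYsub hmem hcover hsorted hchild
    rcases isSubtree_inv hR with rfl | ⟨t, ht, hRt⟩
    · rw [hcon.support_eq, G'.restrict_self]; exact hcon
    · rw [children_node] at ht
      have h2 := ih t ht hRt
      rwa [FinHypergraph.restrict_restrict G' hRt.support_subset] at h2

theorem IsConstruct.labels_subset {G : FinHypergraph α} {T : FTree α}
    (h : IsConstruct G T) {L : Finset α} (hL : L ∈ T.labels) : L ⊆ T.support := by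
  induction h generalizing L with
  | @node G' Y ts hY hYsub hmem hcover hsorted hchild ih =>
    rcases mem_labels_node.mp hL with rfl | ⟨t, ht, hLt⟩
    · exact fun a ha => mem_support_node.mpr (Or.inl ha)
    · exact ((ih t ht hLt)).trans (FTree.child_support_subset ht)

theorem IsConstruct.exists_mem_label {G : FinHypergraph α} {T : FTree α}
    (h : IsConstruct G T) {w : α} (hw : w ∈ T.support) : ∃ L ∈ T.labels, w ∈ L := by
  induction h generalizing w with
  | @node G' Y ts hY hYsub hmem hcover hsorted hchild ih =>
    rcases mem_support_node.mp hw with h' | ⟨t, ht, h'⟩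
    · exact ⟨Y, mem_labels_node.mpr (Or.inl rfl), h'⟩
    · obtain ⟨L, hL, hwL⟩ := ih t ht h'
      exact ⟨L, mem_labels_node.mpr (Or.inr ⟨t, ht, hL⟩), hwL⟩

theorem IsConstruct.children_support_inj {G : FinHypergraph α} {Y : Finset α}
    {ts : List (FTree α)} (h : IsConstruct G (FTree.node Y ts)) {t₁ t₂ : FTree α}
    (h₁ : t₁ ∈ ts) (h₂ : t₂ ∈ ts) (hs : t₁.support = t₂.support) : t₁ = t₂ := by
  cases h with
  | node Y ts hY hYsub hmem hcover hsorted hchild =>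
    by_contra hne
    have hp : ts.Pairwise fun a b : FTree α =>
        a.support.max < b.support.max ∨ b.support.max < a.support.max :=
      hsorted.imp Or.inl
    have hsymm : Symmetric fun a b : FTree α =>
        a.support.max < b.support.max ∨ b.support.max < a.support.max :=
      fun a b hab => hab.symm
    letI : Std.Symm (fun a b : FTree α =>
        a.support.max < b.support.max ∨ b.support.max < a.support.max) := ⟨fun a b => @hsymm a b⟩
    have h3 := hp.forall h₁ h₂ hne
    rw [hs] at h3
    exact h3.elim (lt_irrefl _) (lt_irrefl _)

end ConstructLemmas

theorem IsConstruct.child_isComponent {α : Type*} [LinearOrder α] {G : FinHypergraph α}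
    {Y : Finset α} {ts : List (FTree α)} (h : IsConstruct G (FTree.node Y ts))
    {t : FTree α} (ht : t ∈ ts) : (G.restrict (G.verts \ Y)).IsComponent t.support := by
  cases h with
  | node Y ts hY hYsub hmem hcover hsorted hchild => exact hmem t ht

theorem IsConstruct.child_cover {α : Type*} [LinearOrder α] {G : FinHypergraph α}
    {Y : Finset α} {ts : List (FTree α)} (h : IsConstruct G (FTree.node Y ts)) :
    ∀ C : Finset α, (G.restrict (G.verts \ Y)).IsComponent C → ∃ t ∈ ts, t.support = C := by
  cases h with
  | node Y ts hY hYsub hmem hcover hsorted hchild => exact hcover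

theorem IsConstruct.pairwise_children {α : Type*} [LinearOrder α] {G : FinHypergraph α}
    {Y : Finset α} {ts : List (FTree α)} (h : IsConstruct G (FTree.node Y ts)) :
    ts.Pairwise fun a b => a.support.max < b.support.max := by
  cases h with
  | node Y ts hY hYsub hmem hcover hsorted hchild => exact hsorted

theorem IsConstruct.mem_child_support_iff {α : Type*} [LinearOrder α] {G : FinHypergraph α}
    {Y : Finset α} {ts : List (FTree α)} (h : IsConstruct G (FTree.node Y ts)) (a : α) :
    (∃ c ∈ ts, a ∈ c.support) ↔ a ∈ G.verts \ Y := by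
  constructor
  · rintro ⟨c, hc, hac⟩
    exact h.child_support hc hac
  · intro ha
    have ha' : a ∈ (G.restrict (G.verts \ Y)).verts := by
      rw [G.restrict_verts_of_subset Finset.sdiff_subset]; exact ha
    obtain ⟨C, hC, haC⟩ := FinHypergraph.exists_isComponent ha'
    obtain ⟨t, ht, hts⟩ := h.child_cover C hC
    exact ⟨t, ht, hts ▸ haC⟩
section SubtreeLemmas

open FTree FinHypergraph

variable {α : Type*} [LinearOrder α]

theorem IsConstruct.subtree_at_label {G : FinHypergraph α} {T : FTree α}
    (h : IsConstruct G T) {L : Finset α} (hL : L ∈ T.labels) :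
    ∃ R, IsSubtree R T ∧ R.label = L ∧
      ∀ B ∈ T.nests, ∀ z ∈ L, z ∈ B → R.support ⊆ B := by
  induction h generalizing L with
  | @node G' Y ts hY hYsub hmem hcover hsorted hchild ih =>
    have hcon := IsConstruct.node Y ts hY hYsub hmem hcover hsorted hchild
    rcases mem_labels_node.mp hL with rfl | ⟨t₀, ht₀, hLt⟩
    · refine ⟨FTree.node L ts, IsSubtree.refl _, rfl, ?_⟩
      intro B hB z hz hzB
      rw [nests_node] at hB
      rcases List.mem_cons.mp hB with rfl | hB
      · exact Finset.Subset.refl _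
      · obtain ⟨t, ht, hBt⟩ := mem_nestsList.mp hB
        have hBs : B ⊆ t.support :=
          ((hcon.child_construct ht).nest_subset_support (hcon.child_connected ht) hBt)
        have := hcon.child_support ht (hBs hzB)
        exact absurd hz (Finset.mem_sdiff.mp this).2
    · obtain ⟨R, hRsub, hRlab, hRmin⟩ := ih t₀ ht₀ hLt
      have hLs : L ⊆ t₀.support := (hcon.child_construct ht₀).labels_subset hLt
      refine ⟨R, IsSubtree.child hRsub ht₀, hRlab, ?_⟩
      intro B hB z hz hzB
      rw [nests_node] at hB
      rcases List.mem_cons.mp hB with rfl | hB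
      · exact hRsub.support_subset.trans (FTree.child_support_subset ht₀)
      · obtain ⟨t₁, ht₁, hBt⟩ := mem_nestsList.mp hB
        have hBs : B ⊆ t₁.support :=
          ((hcon.child_construct ht₁).nest_subset_support (hcon.child_connected ht₁) hBt)
        have ht01 : t₁ = t₀ := by
          have hz1 : z ∈ t₁.support := hBs hzB
          have hz0 : z ∈ t₀.support := hLs hz
          have hmem' := fun t ht => hcon.child_isComponent (t := t) ht
          exact hcon.children_support_inj ht₁ ht₀
              (FinHypergraph.isComponent_eq_of_nonempty_inter (hmem' t₁ ht₁) (hmem' t₀ ht₀)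
                ⟨z, Finset.mem_inter.mpr ⟨hz1, hz0⟩⟩)
        subst ht01
        exact hRmin B hBt z hz hzB

theorem IsConstruct.subtree_eq_of_support_eq {G : FinHypergraph α} {T : FTree α}
    (h : IsConstruct G T) {R₁ R₂ : FTree α} (h₁ : IsSubtree R₁ T) (h₂ : IsSubtree R₂ T)
    (hs : R₁.support = R₂.support) : R₁ = R₂ := by
  induction h generalizing R₁ R₂ with
  | @node G' Y ts hY hYsub hmem hcover hsorted hchild ih =>
    have hcon := IsConstruct.node Y ts hY hYsub hmem hcover hsorted hchild
    rcases isSubtree_inv h₁ with rfl | ⟨t₁, ht₁, hR₁⟩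
    · rcases isSubtree_inv h₂ with rfl | ⟨t₂, ht₂, hR₂⟩
      · rfl
      · exfalso
        rw [children_node] at ht₂
        obtain ⟨y₀, hy₀⟩ := hY
        have h3 : y₀ ∈ R₂.support := by
          rw [← hs]; exact mem_support_node.mpr (Or.inl hy₀)
        have := hcon.child_support ht₂ (hR₂.support_subset h3)
        exact (Finset.mem_sdiff.mp this).2 hy₀
    · rcases isSubtree_inv h₂ with rfl | ⟨t₂, ht₂, hR₂⟩
      · exfalso
        rw [children_node] at ht₁
        obtain ⟨y₀, hy₀⟩ := hY
        have h3 : y₀ ∈ R₁.support := by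
          rw [hs]; exact mem_support_node.mpr (Or.inl hy₀)
        have := hcon.child_support ht₁ (hR₁.support_subset h3)
        exact (Finset.mem_sdiff.mp this).2 hy₀
      · rw [children_node] at ht₁ ht₂
        have hne : R₁.support.Nonempty := by
          have := (hcon.subtree_construct (IsSubtree.child hR₁ ht₁)).label_nonempty
          obtain ⟨z, hz⟩ := this
          exact ⟨z, label_subset_support _ hz⟩
        obtain ⟨z, hz⟩ := hne
        have hz₂ : z ∈ R₂.support := hs ▸ hz
        have heq : t₁ = t₂ := by
          have hmem' := fun t ht => hcon.child_isComponent (t := t) ht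
          exact hcon.children_support_inj ht₁ ht₂
              (FinHypergraph.isComponent_eq_of_nonempty_inter (hmem' t₁ ht₁) (hmem' t₂ ht₂)
                ⟨z, Finset.mem_inter.mpr ⟨hR₁.support_subset hz, hR₂.support_subset hz₂⟩⟩)
        subst heq
        exact ih t₁ ht₁ hR₁ hR₂ hs

theorem IsConstruct.subtree_eq_of_label_eq {G : FinHypergraph α} {T : FTree α}
    (h : IsConstruct G T) {R₁ R₂ : FTree α} (h₁ : IsSubtree R₁ T) (h₂ : IsSubtree R₂ T)
    (hs : R₁.label = R₂.label) : R₁ = R₂ := by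
  induction h generalizing R₁ R₂ with
  | @node G' Y ts hY hYsub hmem hcover hsorted hchild ih =>
    have hcon := IsConstruct.node Y ts hY hYsub hmem hcover hsorted hchild
    rcases isSubtree_inv h₁ with rfl | ⟨t₁, ht₁, hR₁⟩
    · rcases isSubtree_inv h₂ with rfl | ⟨t₂, ht₂, hR₂⟩
      · rfl
      · exfalso
        rw [children_node] at ht₂
        obtain ⟨y₀, hy₀⟩ := hY
        have h3 : y₀ ∈ R₂.support := by
          apply label_subset_support
          rw [← hs]; exact hy₀
        have := hcon.child_support ht₂ (hR₂.support_subset h3)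
        exact (Finset.mem_sdiff.mp this).2 hy₀
    · rcases isSubtree_inv h₂ with rfl | ⟨t₂, ht₂, hR₂⟩
      · exfalso
        rw [children_node] at ht₁
        obtain ⟨y₀, hy₀⟩ := hY
        have h3 : y₀ ∈ R₁.support := by
          apply label_subset_support
          rw [hs]; exact hy₀
        have := hcon.child_support ht₁ (hR₁.support_subset h3)
        exact (Finset.mem_sdiff.mp this).2 hy₀
      · rw [children_node] at ht₁ ht₂
        obtain ⟨z, hz⟩ := (hcon.subtree_construct (IsSubtree.child hR₁ ht₁)).label_nonempty
        have hz₂ : z ∈ R₂.label := hs ▸ hz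
        have heq : t₁ = t₂ := by
          have hmem' := fun t ht => hcon.child_isComponent (t := t) ht
          exact hcon.children_support_inj ht₁ ht₂
              (FinHypergraph.isComponent_eq_of_nonempty_inter (hmem' t₁ ht₁) (hmem' t₂ ht₂)
                ⟨z, Finset.mem_inter.mpr
                  ⟨hR₁.support_subset (label_subset_support _ hz),
                   hR₂.support_subset (label_subset_support _ hz₂)⟩⟩)
        subst heq
        exact ih t₁ ht₁ hR₁ hR₂ hs

theorem IsConstruct.subtreeAt_some_spec {G : FinHypergraph α} {T : FTree α}
    (h : IsConstruct G T) {X : Finset α} {R : FTree α}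
    (hR : FTree.subtreeAt T X = some R) : IsSubtree R T ∧ R.label = X := by
  induction h generalizing R with
  | @node G' Y ts hY hYsub hmem hcover hsorted hchild ih =>
    rw [FTree.subtreeAt] at hR
    split at hR
    · next heq =>
      cases hR
      exact ⟨IsSubtree.refl _, heq⟩
    · obtain ⟨t, ht, hts⟩ := subtreeAtList_eq_some hR
      obtain ⟨hsub, hlab⟩ := ih t ht hts
      exact ⟨IsSubtree.child hsub ht, hlab⟩

theorem IsConstruct.subtreeAt_isSome {G : FinHypergraph α} {T : FTree α}
    (h : IsConstruct G T) {X : Finset α} (hX : X ∈ T.labels) :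
    ∃ R, FTree.subtreeAt T X = some R := by
  induction h generalizing X with
  | @node G' Y ts hY hYsub hmem hcover hsorted hchild ih =>
    rw [FTree.subtreeAt]
    split
    · exact ⟨_, rfl⟩
    · next hne =>
      rcases mem_labels_node.mp hX with rfl | ⟨t, ht, hXt⟩
      · exact absurd rfl hne
      · cases hlist : FTree.subtreeAtList ts X with
        | none =>
          obtain ⟨R, hR⟩ := ih t ht hXt
          exact absurd hR (by rw [subtreeAtList_eq_none hlist t ht]; simp)
        | some R => exact ⟨R, rfl⟩

/-- The canonical subtree at a singleton label, with minimality of its support among nests. -/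
theorem IsConstruct.suppAt_spec {G : FinHypergraph α} {T : FTree α}
    (h : IsConstruct G T) {w : α} (hw : ({w} : Finset α) ∈ T.labels) :
    ∃ R, IsSubtree R T ∧ R.label = {w} ∧ T.suppAt {w} = R.support ∧
      ∀ B ∈ T.nests, w ∈ B → R.support ⊆ B := by
  obtain ⟨R, hRsub, hRlab, hRmin⟩ := h.subtree_at_label hw
  obtain ⟨R', hR'⟩ := h.subtreeAt_isSome hw
  obtain ⟨hR'sub, hR'lab⟩ := h.subtreeAt_some_spec hR'
  have : R' = R := h.subtree_eq_of_label_eq hR'sub hRsub (hR'lab.trans hRlab.symm)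
  subst this
  refine ⟨R', hRsub, hRlab, ?_, fun B hB hwB => hRmin B hB w (Finset.mem_singleton_self w) hwB⟩
  rw [FTree.suppAt, hR']
  rfl

end SubtreeLemmas
section EqOfNestSet

open FTree FinHypergraph

variable {α : Type*} [LinearOrder α]

private theorem eq_of_matching :
    ∀ (ss ts : List (FTree α)),
      ss.Pairwise (fun a b => a.support.max < b.support.max) →
      ts.Pairwise (fun a b => a.support.max < b.support.max) →
      (∀ c ∈ ss, ∃ d ∈ ts, c.support = d.support) →
      (∀ d ∈ ts, ∃ c ∈ ss, c.support = d.support) →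
      (∀ c ∈ ss, ∀ d ∈ ts, c.support = d.support → c = d) →
      ss = ts := by
  intro ss
  induction ss with
  | nil =>
    intro ts _ _ _ hB _
    cases ts with
    | nil => rfl
    | cons d ts' =>
      obtain ⟨c, hc, -⟩ := hB d (List.mem_cons_self)
      exact absurd hc (List.not_mem_nil)
  | cons c ss' ih =>
    intro ts hss hts hA hB huniq
    cases ts with
    | nil =>
      obtain ⟨d, hd, -⟩ := hA c (List.mem_cons_self)
      exact absurd hd (List.not_mem_nil)
    | cons d₀ ts' =>
      obtain ⟨hclt, hss'⟩ := List.pairwise_cons.mp hss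
      obtain ⟨hdlt, hts'⟩ := List.pairwise_cons.mp hts
      obtain ⟨d, hd, hcd⟩ := hA c (List.mem_cons_self)
      have hdd₀ : d = d₀ := by
        rcases List.mem_cons.mp hd with rfl | hd'
        · rfl
        · exfalso
          obtain ⟨c', hc', hc'd₀⟩ := hB d₀ (List.mem_cons_self)
          rcases List.mem_cons.mp hc' with rfl | hc''
          · have h1 : d₀.support.max < d.support.max := hdlt d hd'
            rw [← hc'd₀, hcd] at h1
            exact lt_irrefl _ h1
          · have h1 : c.support.max < c'.support.max := hclt c' hc''
            have h2 : d₀.support.max < d.support.max := hdlt d hd'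
            rw [hc'd₀] at h1
            rw [← hcd] at h2
            exact lt_irrefl _ (h1.trans h2)
      subst hdd₀
      have hhead : c = d := huniq c (List.mem_cons_self) d (List.mem_cons_self) hcd
      have htail : ss' = ts' := by
        apply ih ts' hss' hts'
        · intro c'' hc''
          obtain ⟨d'', hd'', h''⟩ := hA c'' (List.mem_cons_of_mem _ hc'')
          rcases List.mem_cons.mp hd'' with rfl | hd''
          · exfalso
            have h1 : c.support.max < c''.support.max := hclt c'' hc''
            rw [h'', ← hcd] at h1
            exact lt_irrefl _ h1
          · exact ⟨d'', hd'', h''⟩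
        · intro d'' hd''
          obtain ⟨c'', hc'', h''⟩ := hB d'' (List.mem_cons_of_mem _ hd'')
          rcases List.mem_cons.mp hc'' with rfl | hc''
          · exfalso
            have h1 : d.support.max < d''.support.max := hdlt d'' hd''
            rw [← h'', hcd] at h1
            exact lt_irrefl _ h1
          · exact ⟨c'', hc'', h''⟩
        · intro c'' hc'' d'' hd'' h''
          exact huniq c'' (List.mem_cons_of_mem _ hc'') d'' (List.mem_cons_of_mem _ hd'') h''
      rw [hhead, htail]

theorem IsConstruct.eq_of_nestSet {G : FinHypergraph α} {S : FTree α}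
    (hS : IsConstruct G S) : G.Connected → ∀ T : FTree α, IsConstruct G T →
      S.nestSet = T.nestSet → S = T := by
  induction hS with
  | @node G' Y ss hY hYsub hmem hcover hsorted hchild ih =>
    intro hG T hT hnest
    have hconS := IsConstruct.node Y ss hY hYsub hmem hcover hsorted hchild
    cases hT with
    | @node _ Z ts hZ hZsub hmem2 hcover2 hsorted2 hchild2 =>
      have hconT := IsConstruct.node Z ts hZ hZsub hmem2 hcover2 hsorted2 hchild2
      have hmemnest : ∀ A : Finset α,
          A ∈ (FTree.node Y ss).nests ↔ A ∈ (FTree.node Z ts).nests := by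
        intro A
        rw [← List.mem_toFinset, ← List.mem_toFinset]
        exact iff_of_eq (congrArg (A ∈ ·) hnest)
      have hsupS : (FTree.node Y ss).support = G'.verts := hconS.support_eq
      have hsupT : (FTree.node Z ts).support = G'.verts := hconT.support_eq
      -- a nest inside a child of one tree is not the full support
      have hnotfullS : ∀ A : Finset α, A ⊆ G'.verts \ Y → A ≠ (FTree.node Z ts).support := by
        intro A hA hAeq
        obtain ⟨y₀, hy₀⟩ := hY
        have : y₀ ∈ A := by rw [hAeq, hsupT]; exact hYsub hy₀
        exact (Finset.mem_sdiff.mp (hA this)).2 hy₀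
      have hnotfullT : ∀ A : Finset α, A ⊆ G'.verts \ Z → A ≠ (FTree.node Y ss).support := by
        intro A hA hAeq
        obtain ⟨z₀, hz₀⟩ := hZ
        have : z₀ ∈ A := by rw [hAeq, hsupS]; exact hZsub hz₀
        exact (Finset.mem_sdiff.mp (hA this)).2 hz₀
      -- step A
      have stepA : ∀ c ∈ ss, ∃ d ∈ ts, c.support = d.support := by
        intro c hc
        have hcS : c.support ∈ (FTree.node Y ss).nests :=
          (IsSubtree.child (IsSubtree.refl c) (by rw [children_node]; exact hc)).support_mem_nests
        have hcT := (hmemnest _).mp hcS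
        rw [nests_node] at hcT
        rcases List.mem_cons.mp hcT with heq | hcT
        · exact absurd heq (hnotfullS c.support (hconS.child_support hc))
        · obtain ⟨d, hd, hcd⟩ := mem_nestsList.mp hcT
          have hsub1 : c.support ⊆ d.support :=
            (hconT.child_construct hd).nest_subset_support (hconT.child_connected hd) hcd
          -- now bound d.support by some child of S
          have hdS : d.support ∈ (FTree.node Y ss).nests := (hmemnest _).mpr
            (IsSubtree.child (IsSubtree.refl d) (by rw [children_node]; exact hd)).support_mem_nests
          rw [nests_node] at hdS
          rcases List.mem_cons.mp hdS with heq | hdS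
          · exact absurd heq (hnotfullT d.support (hconT.child_support hd))
          · obtain ⟨c', hc', hdc'⟩ := mem_nestsList.mp hdS
            have hsub2 : d.support ⊆ c'.support :=
              (hconS.child_construct hc').nest_subset_support (hconS.child_connected hc') hdc'
            have hcc' : c.support = c'.support := by
              have hne : c.support.Nonempty := by
                obtain ⟨z, hz⟩ := (hconS.child_construct hc).label_nonempty
                exact ⟨z, label_subset_support _ hz⟩
              obtain ⟨z, hz⟩ := hne
              have := FinHypergraph.isComponent_eq_of_nonempty_inter
                (hconS.child_isComponent hc) (hconS.child_isComponent hc')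
                ⟨z, Finset.mem_inter.mpr ⟨hz, hsub2 (hsub1 hz)⟩⟩
              exact this
            refine ⟨d, hd, Finset.Subset.antisymm hsub1 ?_⟩
            rw [hcc']
            exact hsub2
      have stepB : ∀ d ∈ ts, ∃ c ∈ ss, c.support = d.support := by
        intro d hd
        have hdS : d.support ∈ (FTree.node Y ss).nests := (hmemnest _).mpr
          (IsSubtree.child (IsSubtree.refl d) (by rw [children_node]; exact hd)).support_mem_nests
        rw [nests_node] at hdS
        rcases List.mem_cons.mp hdS with heq | hdS
        · exact absurd heq (hnotfullT d.support (hconT.child_support hd))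
        · obtain ⟨c, hc, hdc⟩ := mem_nestsList.mp hdS
          have hsub1 : d.support ⊆ c.support :=
            (hconS.child_construct hc).nest_subset_support (hconS.child_connected hc) hdc
          have hcT : c.support ∈ (FTree.node Z ts).nests := (hmemnest _).mp
            (IsSubtree.child (IsSubtree.refl c) (by rw [children_node]; exact hc)).support_mem_nests
          rw [nests_node] at hcT
          rcases List.mem_cons.mp hcT with heq | hcT
          · exact absurd heq (hnotfullS c.support (hconS.child_support hc))
          · obtain ⟨d', hd', hcd'⟩ := mem_nestsList.mp hcT
            have hsub2 : c.support ⊆ d'.support :=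
              (hconT.child_construct hd').nest_subset_support (hconT.child_connected hd') hcd'
            have hdd' : d.support = d'.support := by
              have hne : d.support.Nonempty := by
                obtain ⟨z, hz⟩ := (hconT.child_construct hd).label_nonempty
                exact ⟨z, label_subset_support _ hz⟩
              obtain ⟨z, hz⟩ := hne
              exact FinHypergraph.isComponent_eq_of_nonempty_inter
                (hconT.child_isComponent hd) (hconT.child_isComponent hd')
                ⟨z, Finset.mem_inter.mpr ⟨hz, hsub2 (hsub1 hz)⟩⟩
            refine ⟨c, hc, Finset.Subset.antisymm ?_ hsub1⟩
            rw [hdd']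
            exact hsub2
      -- step C : Y = Z
      have hYZ : Y = Z := by
        have hiff : ∀ a : α, (a ∈ G'.verts \ Y) ↔ (a ∈ G'.verts \ Z) := by
          intro a
          rw [← hconS.mem_child_support_iff a, ← hconT.mem_child_support_iff a]
          constructor
          · rintro ⟨c, hc, hac⟩
            obtain ⟨d, hd, hcd⟩ := stepA c hc
            exact ⟨d, hd, hcd ▸ hac⟩
          · rintro ⟨d, hd, had⟩
            obtain ⟨c, hc, hcd⟩ := stepB d hd
            exact ⟨c, hc, hcd.symm ▸ had⟩
        ext a
        constructor
        · intro ha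
          by_contra haZ
          have h1 : a ∈ G'.verts \ Z := Finset.mem_sdiff.mpr ⟨hYsub ha, haZ⟩
          have h2 := (hiff a).mpr h1
          exact (Finset.mem_sdiff.mp h2).2 ha
        · intro ha
          by_contra haY
          have h1 : a ∈ G'.verts \ Y := Finset.mem_sdiff.mpr ⟨hZsub ha, haY⟩
          have h2 := (hiff a).mp h1
          exact (Finset.mem_sdiff.mp h2).2 ha
      -- step D : matched children are equal
      have stepD : ∀ c ∈ ss, ∀ d ∈ ts, c.support = d.support → c = d := by
        intro c hc d hd hcd
        -- nest sets of c and d agree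
        have hnest' : c.nestSet = d.nestSet := by
          have key : ∀ A : Finset α, A ∈ c.nests ↔ A ∈ d.nests := by
            intro A
            constructor
            · intro hA
              have hAS : A ∈ (FTree.node Y ss).nests := by
                rw [nests_node]
                exact List.mem_cons_of_mem _ (mem_nestsList.mpr ⟨c, hc, hA⟩)
              have hAc : A ⊆ c.support :=
                (hconS.child_construct hc).nest_subset_support (hconS.child_connected hc) hA
              have hAne : A.Nonempty :=
                ((hconS.child_construct hc).nest_spec (hconS.child_connected hc) hA).1
              have hAT := (hmemnest _).mp hAS
              rw [nests_node] at hAT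
              rcases List.mem_cons.mp hAT with heq | hAT
              · exact absurd heq (hnotfullS A (hAc.trans (hconS.child_support hc)))
              · obtain ⟨d', hd', hAd'⟩ := mem_nestsList.mp hAT
                have hAd's : A ⊆ d'.support :=
                  (hconT.child_construct hd').nest_subset_support (hconT.child_connected hd') hAd'
                obtain ⟨z, hz⟩ := hAne
                have : d'.support = d.support :=
                  FinHypergraph.isComponent_eq_of_nonempty_inter
                    (hconT.child_isComponent hd') (hconT.child_isComponent hd)
                    ⟨z, Finset.mem_inter.mpr ⟨hAd's hz, hcd ▸ hAc hz⟩⟩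
                have hd'd : d' = d := hconT.children_support_inj hd' hd this
                exact hd'd ▸ hAd'
            · intro hA
              have hAT : A ∈ (FTree.node Z ts).nests := by
                rw [nests_node]
                exact List.mem_cons_of_mem _ (mem_nestsList.mpr ⟨d, hd, hA⟩)
              have hAd : A ⊆ d.support :=
                (hconT.child_construct hd).nest_subset_support (hconT.child_connected hd) hA
              have hAne : A.Nonempty :=
                ((hconT.child_construct hd).nest_spec (hconT.child_connected hd) hA).1
              have hAS := (hmemnest _).mpr hAT
              rw [nests_node] at hAS
              rcases List.mem_cons.mp hAS with heq | hAS
              · exact absurd heq (hnotfullT A (hAd.trans (hconT.child_support hd)))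
              · obtain ⟨c', hc', hAc'⟩ := mem_nestsList.mp hAS
                have hAc's : A ⊆ c'.support :=
                  (hconS.child_construct hc').nest_subset_support (hconS.child_connected hc') hAc'
                obtain ⟨z, hz⟩ := hAne
                have : c'.support = c.support :=
                  FinHypergraph.isComponent_eq_of_nonempty_inter
                    (hconS.child_isComponent hc') (hconS.child_isComponent hc)
                    ⟨z, Finset.mem_inter.mpr ⟨hAc's hz, hcd.symm ▸ hAd hz⟩⟩
                have hc'c : c' = c := hconS.children_support_inj hc' hc this
                exact hc'c ▸ hAc'
          unfold FTree.nestSet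
          ext A
          rw [List.mem_toFinset, List.mem_toFinset]
          exact key A
        have hdcon : IsConstruct (G'.restrict c.support) d := by
          rw [hcd]; exact hconT.child_construct hd
        exact ih c hc (hconS.child_connected hc) d hdcon hnest'
      have hlists : ss = ts :=
        eq_of_matching ss ts hsorted hsorted2 stepA stepB stepD
      rw [hYZ, hlists]

end EqOfNestSet
section DigitLemma

private theorem geom_aux (B : ℕ) (hB : 1 ≤ B) :
    ∀ R : ℕ, (∑ j ∈ Finset.range R, (B - 1) * B ^ j) + 1 = B ^ R := by
  intro R
  induction R with
  | zero => simp
  | succ R ihR =>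
    rw [Finset.sum_range_succ, pow_succ]
    have : (∑ j ∈ Finset.range R, (B - 1) * B ^ j) + (B - 1) * B ^ R + 1
        = (B - 1) * B ^ R + ((∑ j ∈ Finset.range R, (B - 1) * B ^ j) + 1) := by ring
    rw [this, ihR]
    have h1 : (B - 1) * B ^ R + B ^ R = ((B - 1) + 1) * B ^ R := by ring
    rw [h1, Nat.sub_add_cancel hB, mul_comm]

private theorem sum_lt_pow {β : Type*} [DecidableEq β] {s : Finset β} (c r : β → ℕ) (B R : ℕ)
    (hB : 1 ≤ B) (hc : ∀ a ∈ s, c a < B) (hrR : ∀ a ∈ s, r a < R)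
    (hrinj : ∀ a ∈ s, ∀ b ∈ s, r a = r b → a = b) :
    (∑ a ∈ s, c a * B ^ r a) < B ^ R := by
  have h1 : (∑ a ∈ s, c a * B ^ r a) ≤ ∑ a ∈ s, (B - 1) * B ^ r a :=
    Finset.sum_le_sum fun a ha =>
      Nat.mul_le_mul_right _ (Nat.le_pred_of_lt (hc a ha))
  have h2 : (∑ a ∈ s, (B - 1) * B ^ r a) = ∑ j ∈ s.image r, (B - 1) * B ^ j := by
    rw [Finset.sum_image]
    intro a ha b hb hab
    exact hrinj a ha b hb hab
  have h3 : s.image r ⊆ Finset.range R := by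
    intro j hj
    obtain ⟨a, ha, rfl⟩ := Finset.mem_image.mp hj
    exact Finset.mem_range.mpr (hrR a ha)
  have h4 : (∑ j ∈ s.image r, (B - 1) * B ^ j) ≤ ∑ j ∈ Finset.range R, (B - 1) * B ^ j :=
    Finset.sum_le_sum_of_subset h3
  have h5 := geom_aux B hB R
  omega

theorem digit_lt {β : Type*} [LinearOrder β] {s : Finset β} (v v' r : β → ℕ) (B : ℕ)
    (hB : 1 ≤ B) (hv' : ∀ a ∈ s, v' a < B) {x : β} (hx : x ∈ s) (hlt : v' x < v x)
    (heq : ∀ a ∈ s, a < x → v' a = v a)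
    (hr : ∀ a ∈ s, ∀ b ∈ s, a < b → r b < r a) :
    (∑ a ∈ s, v' a * B ^ r a) < ∑ a ∈ s, v a * B ^ r a := by
  classical
  set s₁ := s.filter (· < x) with hs₁
  set s₂ := s.filter (x < ·) with hs₂
  have hfilt : s.filter (fun a => ¬ a < x) = insert x s₂ := by
    ext a
    simp only [Finset.mem_filter, Finset.mem_insert, hs₂, not_lt]
    constructor
    · rintro ⟨ha, hxa⟩
      rcases eq_or_lt_of_le hxa with h | h
      · exact Or.inl h.symm
      · exact Or.inr ⟨ha, h⟩
    · rintro (rfl | ⟨ha, h⟩)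
      · exact ⟨hx, le_refl _⟩
      · exact ⟨ha, h.le⟩
  have hxs₂ : x ∉ s₂ := by simp [hs₂]
  have hsplit : ∀ f : β → ℕ,
      (∑ a ∈ s, f a) = (∑ a ∈ s₁, f a) + (f x + ∑ a ∈ s₂, f a) := by
    intro f
    rw [← Finset.sum_filter_add_sum_filter_not s (· < x) f, hfilt,
      Finset.sum_insert hxs₂]
  rw [hsplit (fun a => v' a * B ^ r a), hsplit (fun a => v a * B ^ r a)]
  have hs₁eq : (∑ a ∈ s₁, v' a * B ^ r a) = ∑ a ∈ s₁, v a * B ^ r a := by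
    apply Finset.sum_congr rfl
    intro a ha
    rcases Finset.mem_filter.mp ha with ⟨has, halt⟩
    rw [heq a has halt]
  rw [hs₁eq]
  apply Nat.add_lt_add_left
  have htail : (∑ a ∈ s₂, v' a * B ^ r a) < B ^ r x := by
    apply sum_lt_pow _ _ _ _ hB
    · intro a ha
      exact hv' a (Finset.mem_filter.mp ha).1
    · intro a ha
      rcases Finset.mem_filter.mp ha with ⟨has, hxa⟩
      exact hr x hx a has hxa
    · intro a ha b hb hab
      rcases Finset.mem_filter.mp ha with ⟨has, -⟩
      rcases Finset.mem_filter.mp hb with ⟨hbs, -⟩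
      rcases lt_trichotomy a b with h | h | h
      · exact absurd hab (Nat.ne_of_gt (hr a has b hbs h))
      · exact h
      · exact absurd hab (Nat.ne_of_lt (hr b hbs a has h))
  calc v' x * B ^ r x + ∑ a ∈ s₂, v' a * B ^ r a
      < v' x * B ^ r x + B ^ r x := Nat.add_lt_add_left htail _
    _ = (v' x + 1) * B ^ r x := by ring
    _ ≤ v x * B ^ r x := Nat.mul_le_mul_right _ hlt
    _ ≤ v x * B ^ r x + ∑ a ∈ s₂, v a * B ^ r a := Nat.le_add_right _ _

end DigitLemma
section FlipKey

open FTree FinHypergraph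

variable {α : Type*} [LinearOrder α]

theorem flip_key {H : FinHypergraph α} (hH : H.Connected) {S T : FTree α}
    (hflip : Flip H S T) :
    ∃ x ∈ H.verts, coordVec H T x < coordVec H S x ∧
      ∀ w ∈ H.verts, w < x → coordVec H T w = coordVec H S w := by
  classical
  obtain ⟨hScon, hTcon, hST, V, x, y, hVc, hVdim, hxy, hxyV,
    ⟨N, hNmem, hNne, hNSet⟩, ⟨M, hMmem, hMne, hMSet⟩, hPC, hlt⟩ := hflip
  obtain ⟨hSc, hSsing⟩ := hScon
  obtain ⟨hTc, hTsing⟩ := hTcon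
  -- nest set decompositions
  have hNS : N ∈ S.nestSet := List.mem_toFinset.mpr hNmem
  have hMT : M ∈ T.nestSet := List.mem_toFinset.mpr hMmem
  have hSnest : S.nestSet = insert N V.nestSet := by
    rw [hNSet, Finset.insert_erase hNS]
  have hTnest : T.nestSet = insert M V.nestSet := by
    rw [hMSet, Finset.insert_erase hMT]
  have hNnotV : N ∉ V.nestSet := by rw [hNSet]; exact Finset.notMem_erase _ _
  have hMnotV : M ∉ V.nestSet := by rw [hMSet]; exact Finset.notMem_erase _ _
  have hVS : ∀ A : Finset α, A ∈ V.nestSet → A ∈ S.nestSet := by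
    intro A hA; rw [hSnest]; exact Finset.mem_insert_of_mem hA
  have hVT : ∀ A : Finset α, A ∈ V.nestSet → A ∈ T.nestSet := by
    intro A hA; rw [hTnest]; exact Finset.mem_insert_of_mem hA
  -- the minimal nest K of V containing x and y
  obtain ⟨RV, hRVsub, hRVlab, hKmin⟩ := hVc.subtree_at_label hxyV
  set K := RV.support with hKdef
  have hxinxy : x ∈ ({x, y} : Finset α) := Finset.mem_insert_self _ _
  have hyinxy : y ∈ ({x, y} : Finset α) :=
    Finset.mem_insert_of_mem (Finset.mem_singleton_self _)
  have hxK : x ∈ K := label_subset_support RV (hRVlab ▸ hxinxy)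
  have hyK : y ∈ K := label_subset_support RV (hRVlab ▸ hyinxy)
  have hKnest : K ∈ V.nests := hRVsub.support_mem_nests
  have hKV : K ∈ V.nestSet := List.mem_toFinset.mpr hKnest
  have hKminx : ∀ B : Finset α, B ∈ V.nestSet → x ∈ B → K ⊆ B := by
    intro B hB hxB
    exact hKmin B (List.mem_toFinset.mp hB) x hxinxy hxB
  have hKminy : ∀ B : Finset α, B ∈ V.nestSet → y ∈ B → K ⊆ B := by
    intro B hB hyB
    exact hKmin B (List.mem_toFinset.mp hB) y hyinxy hyB
  have hKspec := hVc.nest_spec hH hKnest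
  have hKverts : K ⊆ H.verts := hKspec.2.1
  have hxverts : x ∈ H.verts := hKverts hxK
  have hyverts : y ∈ H.verts := hKverts hyK
  have hKsat : K ∈ H.sat := by
    rw [FinHypergraph.sat, Finset.mem_filter, Finset.mem_powerset]
    exact ⟨hKverts, hKspec.2.2⟩
  -- singleton labels
  have hSlab : ∀ w ∈ H.verts, ({w} : Finset α) ∈ S.labels := by
    intro w hw
    have hw' : w ∈ S.support := by rw [hSc.support_eq]; exact hw
    obtain ⟨L, hL, hwL⟩ := hSc.exists_mem_label hw'
    obtain ⟨a, ha⟩ := Finset.card_eq_one.mp (hSsing L hL)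
    rw [ha] at hwL
    have haw : a = w := (Finset.mem_singleton.mp hwL).symm
    rw [← haw, ← ha]
    exact hL
  have hTlab : ∀ w ∈ H.verts, ({w} : Finset α) ∈ T.labels := by
    intro w hw
    have hw' : w ∈ T.support := by rw [hTc.support_eq]; exact hw
    obtain ⟨L, hL, hwL⟩ := hTc.exists_mem_label hw'
    obtain ⟨a, ha⟩ := Finset.card_eq_one.mp (hTsing L hL)
    rw [ha] at hwL
    have haw : a = w := (Finset.mem_singleton.mp hwL).symm
    rw [← haw, ← ha]
    exact hL
  -- S side: analyze the parent-child pair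
  obtain ⟨R, hRS, hRlab, t, htmem, htlab⟩ := hPC
  have htR : IsSubtree t R := IsSubtree.child (IsSubtree.refl t) htmem
  have htS : IsSubtree t S := htR.trans hRS
  have hRcon : IsConstruct (H.restrict R.support) R := hSc.subtree_construct hRS
  have hyt : y ∈ t.support := label_subset_support t (htlab ▸ Finset.mem_singleton_self y)
  have hxR : x ∈ R.support := label_subset_support R (hRlab ▸ Finset.mem_singleton_self x)
  -- t.support avoids x and is a component
  obtain ⟨Lx, cs⟩ := R
  have hLx : Lx = ({x} : Finset α) := hRlab
  subst hLx
  rw [children_node] at htmem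
  have hxt : x ∉ t.support := by
    intro hxt
    have := hRcon.child_support htmem hxt
    rw [Finset.mem_sdiff] at this
    exact this.2 (Finset.mem_singleton_self x)
  have htnestS : t.support ∈ S.nestSet := List.mem_toFinset.mpr htS.support_mem_nests
  have hNeq : t.support = N := by
    rcases Finset.mem_insert.mp (hSnest ▸ htnestS) with h | h
    · exact h
    · exfalso
      exact hxt (hKminy _ h hyt hxK)
  have hyN : y ∈ N := hNeq ▸ hyt
  have hxN : x ∉ N := hNeq ▸ hxt
  -- canonical subtree at {x} in S
  obtain ⟨Rx, hRxsub, hRxlab, hsuppSx, hRxmin⟩ := hSc.suppAt_spec (hSlab x hxverts)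
  have hRRx : FTree.node {x} cs = Rx :=
    hSc.subtree_eq_of_label_eq hRS hRxsub (hRlab.trans hRxlab.symm)
  have hRnestS : (FTree.node {x} cs).support ∈ S.nestSet :=
    List.mem_toFinset.mpr hRS.support_mem_nests
  have hRV' : (FTree.node {x} cs).support ∈ V.nestSet := by
    rcases Finset.mem_insert.mp (hSnest ▸ hRnestS) with h | h
    · exact absurd (h ▸ hxR) hxN
    · exact h
  have hAK : (FTree.node {x} cs).support = K := by
    apply Finset.Subset.antisymm
    · rw [hRRx]
      exact hRxmin K (List.mem_toFinset.mp (hVS K hKV)) hxK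
    · exact hKminx _ hRV' hxR
  have hsuppSxK : S.suppAt {x} = K := by rw [hsuppSx, ← hRRx, hAK]
  -- N is the component of K \ {x} containing y
  have hNcomp : (H.restrict (K \ {x})).IsComponent N := by
    have h1 := hRcon.child_isComponent htmem
    have hAverts : (H.restrict (FTree.node {x} cs).support).verts
        = (FTree.node {x} cs).support :=
      H.restrict_verts_of_subset (hAK ▸ hKverts)
    rw [hAverts] at h1
    rw [FinHypergraph.restrict_restrict H Finset.sdiff_subset] at h1
    rw [hAK] at h1
    rw [hNeq] at h1
    exact h1
  -- T side : the canonical subtree at {x}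
  obtain ⟨Qx, hQxsub, hQxlab, hsuppTx, hQxmin⟩ := hTc.suppAt_spec (hTlab x hxverts)
  have hxQx : x ∈ Qx.support :=
    label_subset_support _ (hQxlab ▸ Finset.mem_singleton_self x)
  have hQxnest : Qx.support ∈ T.nestSet := List.mem_toFinset.mpr hQxsub.support_mem_nests
  have hBK : Qx.support ⊆ K := hQxmin K (List.mem_toFinset.mp (hVT K hKV)) hxK
  by_cases hBV : Qx.support ∈ V.nestSet
  · exfalso
    have hKB : K ⊆ Qx.support := hKminx _ hBV hxQx
    have hBKeq : Qx.support = K := Finset.Subset.antisymm hBK hKB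
    have hQcon : IsConstruct (H.restrict Qx.support) Qx := hTc.subtree_construct hQxsub
    obtain ⟨Lq, ds⟩ := Qx
    have hLq : Lq = ({x} : Finset α) := hQxlab
    subst hLq
    have hvertsB : (H.restrict (FTree.node {x} ds).support).verts
        = (FTree.node {x} ds).support :=
      H.restrict_verts_of_subset (hBKeq ▸ hKverts)
    have hyB : y ∈ (FTree.node {x} ds).support := by rw [hBKeq]; exact hyK
    have hex : ∃ d ∈ ds, y ∈ d.support := by
      apply (hQcon.mem_child_support_iff y).mpr
      rw [hvertsB]
      refine Finset.mem_sdiff.mpr ⟨hyB, ?_⟩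
      rw [Finset.mem_singleton]
      exact fun h => hxy h.symm
    obtain ⟨d, hd, hyd⟩ := hex
    have hdcomp0 := hQcon.child_isComponent hd
    rw [hvertsB, FinHypergraph.restrict_restrict H Finset.sdiff_subset, hBKeq] at hdcomp0
    have hdN : d.support = N :=
      FinHypergraph.isComponent_eq_of_nonempty_inter hdcomp0 hNcomp
        ⟨y, Finset.mem_inter.mpr ⟨hyd, hyN⟩⟩
    have hdT : d.support ∈ T.nestSet := List.mem_toFinset.mpr
      ((IsSubtree.child (IsSubtree.refl d)
        (by rw [children_node]; exact hd)).trans hQxsub).support_mem_nests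
    have hNT : N ∈ T.nestSet := hdN ▸ hdT
    have hNM : N = M := by
      rcases Finset.mem_insert.mp (hTnest ▸ hNT) with h | h
      · exact h
      · exact absurd h hNnotV
    exact hST (hSc.eq_of_nestSet hH T hTc (by rw [hSnest, hTnest, hNM]))
  · -- main case : Qx.support = M
    have hBM : Qx.support = M := by
      rcases Finset.mem_insert.mp (hTnest ▸ hQxnest) with h | h
      · exact h
      · exact absurd h hBV
    have hMK : M ⊆ K := hBM ▸ hBK
    have hyM : y ∉ M := by
      intro hyM'
      obtain ⟨Qy, hQysub, hQylab, hsuppTy, hQymin⟩ := hTc.suppAt_spec (hTlab y hyverts)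
      have hyQy : y ∈ Qy.support :=
        label_subset_support _ (hQylab ▸ Finset.mem_singleton_self y)
      have hCM : Qy.support ⊆ M := hQymin M hMmem hyM'
      by_cases hCeqM : Qy.support = M
      · have hQQ : Qy = Qx :=
          hTc.subtree_eq_of_support_eq hQysub hQxsub (hCeqM.trans hBM.symm)
        have : ({y} : Finset α) = ({x} : Finset α) := by
          rw [← hQylab, hQQ, hQxlab]
        exact hxy (Finset.singleton_injective this).symm
      · have hCnest : Qy.support ∈ T.nestSet := List.mem_toFinset.mpr hQysub.support_mem_nests
        have hCV : Qy.support ∈ V.nestSet := by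
          rcases Finset.mem_insert.mp (hTnest ▸ hCnest) with h | h
          · exact absurd h hCeqM
          · exact h
        have hKC : K ⊆ Qy.support := hKminy _ hCV hyQy
        have hxC : x ∈ Qy.support := hKC hxK
        have hMC : M ⊆ Qy.support := by
          rw [← hBM]
          exact hQxmin _ hQysub.support_mem_nests hxC
        exact hCeqM (Finset.Subset.antisymm hCM hMC)
    refine ⟨x, hxverts, ?_, ?_⟩
    · unfold coordVec
      rw [hsuppSxK, hsuppTx, hBM]
      apply Finset.card_lt_card
      rw [Finset.ssubset_def]
      constructor
      · intro e he
        rcases Finset.mem_filter.mp he with ⟨hes, hxe, heM⟩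
        exact Finset.mem_filter.mpr ⟨hes, hxe, heM.trans hMK⟩
      · intro hcon
        have hKin : K ∈ H.sat.filter fun e => x ∈ e ∧ e ⊆ K :=
          Finset.mem_filter.mpr ⟨hKsat, hxK, Finset.Subset.refl _⟩
        have := Finset.mem_filter.mp (hcon hKin)
        exact hyM (this.2.2 hyK)
    · intro w hw hwx
      obtain ⟨Rw, hRwsub, hRwlab, hsuppSw, hRwmin⟩ := hSc.suppAt_spec (hSlab w hw)
      obtain ⟨Qw, hQwsub, hQwlab, hsuppTw, hQwmin⟩ := hTc.suppAt_spec (hTlab w hw)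
      have hwRw : w ∈ Rw.support :=
        label_subset_support _ (hRwlab ▸ Finset.mem_singleton_self w)
      have hwQw : w ∈ Qw.support :=
        label_subset_support _ (hQwlab ▸ Finset.mem_singleton_self w)
      have hRwN : Rw.support ≠ N := by
        intro h
        have hRt : Rw = t := hSc.subtree_eq_of_support_eq hRwsub htS (h.trans hNeq.symm)
        have : ({w} : Finset α) = ({y} : Finset α) := by rw [← hRwlab, hRt, htlab]
        exact absurd (Finset.singleton_injective this) (hwx.trans hlt).ne
      have hRwV : Rw.support ∈ V.nestSet := by
        have hmem1 : Rw.support ∈ S.nestSet := List.mem_toFinset.mpr hRwsub.support_mem_nests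
        rw [hSnest] at hmem1
        rcases Finset.mem_insert.mp hmem1 with h | h
        · exact absurd h hRwN
        · exact h
      have hQwM : Qw.support ≠ M := by
        intro h
        have hQQ : Qw = Qx := hTc.subtree_eq_of_support_eq hQwsub hQxsub (h.trans hBM.symm)
        have : ({w} : Finset α) = ({x} : Finset α) := by rw [← hQwlab, hQQ, hQxlab]
        exact absurd (Finset.singleton_injective this) hwx.ne
      have hQwV : Qw.support ∈ V.nestSet := by
        have hmem1 : Qw.support ∈ T.nestSet := List.mem_toFinset.mpr hQwsub.support_mem_nests
        rw [hTnest] at hmem1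
        rcases Finset.mem_insert.mp hmem1 with h | h
        · exact absurd h hQwM
        · exact h
      have hsub1 : Rw.support ⊆ Qw.support :=
        hRwmin _ (List.mem_toFinset.mp (hVS _ hQwV)) hwQw
      have hsub2 : Qw.support ⊆ Rw.support :=
        hQwmin _ (List.mem_toFinset.mp (hVT _ hRwV)) hwRw
      have heq : Rw.support = Qw.support := Finset.Subset.antisymm hsub1 hsub2
      unfold coordVec
      rw [hsuppSw, hsuppTw, heq]

end FlipKey
section Measure

variable {α : Type*} [LinearOrder α]

/-- The weighted coordinate sum used to orient the flip relation. -/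
def flipMeasure (H : FinHypergraph α) (S : FTree α) : ℕ :=
  ∑ w ∈ H.verts, coordVec H S w * (H.sat.card + 1) ^ ((H.verts.filter fun u => w ≤ u).card)

theorem flip_measure_lt {H : FinHypergraph α} (hH : H.Connected) {S T : FTree α}
    (hflip : Flip H S T) : flipMeasure H T < flipMeasure H S := by
  classical
  obtain ⟨x, hx, hltx, heq⟩ := flip_key hH hflip
  apply digit_lt (coordVec H S) (coordVec H T)
    (fun w => (H.verts.filter fun u => w ≤ u).card) (H.sat.card + 1)
    (Nat.succ_le_succ (Nat.zero_le _)) ?_ hx hltx heq ?_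
  · intro a _
    exact Nat.lt_succ_of_le (Finset.card_filter_le _ _)
  · intro a ha b hb hab
    apply Finset.card_lt_card
    rw [Finset.ssubset_def]
    constructor
    · intro u hu
      rcases Finset.mem_filter.mp hu with ⟨huv, hbu⟩
      exact Finset.mem_filter.mpr ⟨huv, (hab.le).trans hbu⟩
    · intro hcon
      have haf : a ∈ H.verts.filter fun u => a ≤ u :=
        Finset.mem_filter.mpr ⟨ha, le_refl a⟩
      have := Finset.mem_filter.mp (hcon haf)
      exact absurd this.2 (not_le_of_gt hab)

end Measure

/-- Proposition `p:flip-partial-order`.  For an ordered connected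
hypergraph, the preorder generated by the flip relation is a partial order (its
reflexive–transitive closure is antisymmetric), and the flip relation is well-founded. -/
theorem stmt8 {α : Type*} [LinearOrder α] (H : FinHypergraph α) (hH : H.Connected) :
    (∀ S T : FTree α, Relation.ReflTransGen (Flip H) S T →
      Relation.ReflTransGen (Flip H) T S → S = T) ∧
    WellFounded (fun S T : FTree α => Flip H T S) := by
  have mono : ∀ {A B : FTree α}, Relation.ReflTransGen (Flip H) A B →
      flipMeasure H B ≤ flipMeasure H A := by
    intro A B h
    induction h with
    | refl => exact le_refl _
    | tail hab hbc ih => exact (flip_measure_lt hH hbc).le.trans ih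
  constructor
  · intro S T h1 h2
    by_contra hne
    rcases h1.cases_head with rfl | ⟨c, hSc', hcT⟩
    · exact hne rfl
    · have l1 : flipMeasure H T ≤ flipMeasure H c := mono hcT
      have l2 : flipMeasure H c < flipMeasure H S := flip_measure_lt hH hSc'
      have l3 : flipMeasure H S ≤ flipMeasure H T := mono h2
      omega
  · apply Subrelation.wf ?_ (InvImage.wf (flipMeasure H) Nat.lt_wfRel.wf)
    intro S T h
    exact flip_measure_lt hH h

end
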